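/- Let q_P, q_S, ω ∈ ℂ be nonzero, let A, B : ℝ → Matrix (Fin 2) (Fin 2) ℂ and C ∈ Matrix (Fin 2) (Fin 2) ℂ, and define 𝒢(x,y) = A(x)·(sin((x−y)q_P)/q_P) + B(y)·(sin((x−y)q_S)/q_S) + C·((cos((x−y)q_S) − cos((x−y)q_P))/ω²). Set γ := max{|Im q_P| − Im q_P, (|Im(q_P − q_S)| − Im(q_P − q_S))/2, (|Im(q_P + q_S)| − Im(q_P + q_S))/2} (note γ ≥ 0). Then for all real x ≤ y, the entrywise maximum norm satisfies ‖𝒢(x,y)·e^{−i(x−y)q_P}‖ ≤ (‖A(x)‖/|q_P| + ‖B(y)‖/|q_S| + 2‖C‖/|ω|²)·e^{(y−x)γ}. -/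

import Mathlib

attribute [local instance] Matrix.normedAddCommGroup Matrix.normedSpace

private lemma abs_exp_le' (t γ : ℝ) (ht : 0 ≤ t) (w : ℂ) (h : -w.im ≤ γ) :
    ‖Complex.exp (Complex.I * (t : ℂ) * w)‖ ≤ Real.exp (t * γ) := by
  rw [Complex.norm_exp]
  apply Real.exp_le_exp.mpr
  have hre : (Complex.I * (t : ℂ) * w).re = t * (-w.im) := by
    simp [Complex.mul_re, Complex.mul_im]
  rw [hre]
  exact mul_le_mul_of_nonneg_left h ht

private lemma sc1 (T w : ℂ) :
    Complex.exp (Complex.I * T * w) * Complex.sin (-T * w) =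
      (Complex.exp (Complex.I * T * (2 * w)) - 1) * Complex.I / 2 := by
  rw [Complex.sin]
  have h1 : Complex.exp (Complex.I * T * w) * Complex.exp (-(-T * w) * Complex.I) =
      Complex.exp (Complex.I * T * (2 * w)) := by
    rw [← Complex.exp_add]; congr 1; ring
  have h2 : Complex.exp (Complex.I * T * w) * Complex.exp (-T * w * Complex.I) = 1 := by
    rw [← Complex.exp_add, show Complex.I * T * w + -T * w * Complex.I = 0 by ring,
      Complex.exp_zero]
  linear_combination (Complex.I / 2) * h1 - (Complex.I / 2) * h2

private lemma sc2 (T p s : ℂ) :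
    Complex.exp (Complex.I * T * p) * Complex.sin (-T * s) =
      (Complex.exp (Complex.I * T * (p + s)) - Complex.exp (Complex.I * T * (p - s))) *
        Complex.I / 2 := by
  rw [Complex.sin]
  have h1 : Complex.exp (Complex.I * T * p) * Complex.exp (-(-T * s) * Complex.I) =
      Complex.exp (Complex.I * T * (p + s)) := by
    rw [← Complex.exp_add]; congr 1; ring
  have h2 : Complex.exp (Complex.I * T * p) * Complex.exp (-T * s * Complex.I) =
      Complex.exp (Complex.I * T * (p - s)) := by
    rw [← Complex.exp_add]; congr 1; ring
  linear_combination (Complex.I / 2) * h1 - (Complex.I / 2) * h2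

private lemma sc3 (T p s : ℂ) :
    Complex.exp (Complex.I * T * p) * (Complex.cos (-T * s) - Complex.cos (-T * p)) =
      (Complex.exp (Complex.I * T * (p + s)) + Complex.exp (Complex.I * T * (p - s)) -
        Complex.exp (Complex.I * T * (2 * p)) - 1) / 2 := by
  rw [Complex.cos, Complex.cos]
  have h1 : Complex.exp (Complex.I * T * p) * Complex.exp (-T * s * Complex.I) =
      Complex.exp (Complex.I * T * (p - s)) := by
    rw [← Complex.exp_add]; congr 1; ring
  have h2 : Complex.exp (Complex.I * T * p) * Complex.exp (-(-T * s) * Complex.I) =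
      Complex.exp (Complex.I * T * (p + s)) := by
    rw [← Complex.exp_add]; congr 1; ring
  have h3 : Complex.exp (Complex.I * T * p) * Complex.exp (-T * p * Complex.I) = 1 := by
    rw [← Complex.exp_add, show Complex.I * T * p + -T * p * Complex.I = 0 by ring,
      Complex.exp_zero]
  have h4 : Complex.exp (Complex.I * T * p) * Complex.exp (-(-T * p) * Complex.I) =
      Complex.exp (Complex.I * T * (2 * p)) := by
    rw [← Complex.exp_add]; congr 1; ring
  linear_combination (h1 + h2 - h3 - h4) / 2


/-- Key kernel estimate: the transformed Green kernel `𝒢̃(x,y) = 𝒢(x,y)e^{−i(x−y)q_P}`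
satisfies `‖𝒢̃(x,y)‖ ≤ (‖A(x)‖/|q_P| + ‖B(y)‖/|q_S| + 2‖C‖/|ω|²)·e^{(y−x)γ}` for `x ≤ y`,
where `γ` vanishes exactly on the physical sheet. -/
theorem green_kernel_estimate (qP qS ω : ℂ) (hqP : qP ≠ 0) (hqS : qS ≠ 0) (hω : ω ≠ 0)
    (A B : ℝ → Matrix (Fin 2) (Fin 2) ℂ) (C : Matrix (Fin 2) (Fin 2) ℂ) :
    let G : ℝ → ℝ → Matrix (Fin 2) (Fin 2) ℂ := fun x y =>
      (Complex.sin (((x : ℂ) - y) * qP) / qP) • A x +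
      (Complex.sin (((x : ℂ) - y) * qS) / qS) • B y +
      ((Complex.cos (((x : ℂ) - y) * qS) - Complex.cos (((x : ℂ) - y) * qP)) / ω ^ 2) • C
    let γ : ℝ := max (|qP.im| - qP.im)
      (max ((|(qP - qS).im| - (qP - qS).im) / 2) ((|(qP + qS).im| - (qP + qS).im) / 2))
    ∀ x y : ℝ, x ≤ y →
      ‖(Complex.exp (-Complex.I * ((x : ℂ) - y) * qP)) • G x y‖ ≤
        (‖A x‖ / ‖qP‖ + ‖B y‖ / ‖qS‖ + 2 * ‖C‖ / ‖ω‖ ^ 2) *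
          Real.exp ((y - x) * γ) := by
  intro G γ x y hxy
  set t : ℝ := y - x with ht
  have ht0 : 0 ≤ t := by simp only [ht]; linarith
  set T : ℂ := (t : ℂ) with hT
  have hz : ((x : ℂ) - y) = -T := by rw [hT, ht]; push_cast; ring
  -- γ facts
  have hγ0 : 0 ≤ γ := by
    refine le_trans ?_ (le_max_left _ _)
    have := le_abs_self qP.im; linarith
  have hg1 : -((2 * qP).im) ≤ γ := by
    have h2P : (2 * qP).im = 2 * qP.im := by simp
    rw [h2P]
    refine le_trans ?_ (le_max_left _ _)
    have := neg_abs_le qP.im; linarith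
  have hgm : -((qP - qS).im) ≤ γ := by
    refine le_trans ?_ (le_trans (le_max_left _ _) (le_max_right _ _))
    have := neg_abs_le (qP - qS).im; linarith
  have hgp : -((qP + qS).im) ≤ γ := by
    refine le_trans ?_ (le_trans (le_max_right _ _) (le_max_right _ _))
    have := neg_abs_le (qP + qS).im; linarith
  -- exponential bounds
  have E2P := abs_exp_le' t γ ht0 (2 * qP) hg1
  have EM := abs_exp_le' t γ ht0 (qP - qS) hgm
  have EP := abs_exp_le' t γ ht0 (qP + qS) hgp
  have E0 : (1 : ℝ) ≤ Real.exp (t * γ) := by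
    rw [show (1:ℝ) = Real.exp 0 by simp]
    exact Real.exp_le_exp.mpr (mul_nonneg ht0 hγ0)
  -- scalar bounds
  have h1 : ‖Complex.exp (Complex.I * T * qP) * Complex.sin (-T * qP)‖ ≤ Real.exp (t * γ) := by
    rw [sc1]
    have : ‖(Complex.exp (Complex.I * T * (2 * qP)) - 1) * Complex.I / 2‖ =
        ‖Complex.exp (Complex.I * T * (2 * qP)) - 1‖ / 2 := by
      simp [norm_div, norm_mul]
    rw [this]
    have hs := norm_sub_le (Complex.exp (Complex.I * T * (2 * qP))) 1
    rw [norm_one] at hs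
    linarith
  have h2 : ‖Complex.exp (Complex.I * T * qP) * Complex.sin (-T * qS)‖ ≤ Real.exp (t * γ) := by
    rw [sc2]
    have : ‖(Complex.exp (Complex.I * T * (qP + qS)) - Complex.exp (Complex.I * T * (qP - qS)))
        * Complex.I / 2‖ =
        ‖Complex.exp (Complex.I * T * (qP + qS)) - Complex.exp (Complex.I * T * (qP - qS))‖ / 2 := by
      simp [norm_div, norm_mul]
    rw [this]
    have hs := norm_sub_le (Complex.exp (Complex.I * T * (qP + qS)))
      (Complex.exp (Complex.I * T * (qP - qS)))
    linarith
  have h3 : ‖Complex.exp (Complex.I * T * qP) *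
      (Complex.cos (-T * qS) - Complex.cos (-T * qP))‖ ≤ 2 * Real.exp (t * γ) := by
    rw [sc3]
    have heq : ‖(Complex.exp (Complex.I * T * (qP + qS)) + Complex.exp (Complex.I * T * (qP - qS)) -
        Complex.exp (Complex.I * T * (2 * qP)) - 1) / 2‖ =
        ‖Complex.exp (Complex.I * T * (qP + qS)) + Complex.exp (Complex.I * T * (qP - qS)) -
        Complex.exp (Complex.I * T * (2 * qP)) - 1‖ / 2 := by
      simp [norm_div]
    rw [heq]
    have hs1 := norm_sub_le (Complex.exp (Complex.I * T * (qP + qS)) +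
      Complex.exp (Complex.I * T * (qP - qS)) - Complex.exp (Complex.I * T * (2 * qP))) (1 : ℂ)
    have hs2 := norm_sub_le (Complex.exp (Complex.I * T * (qP + qS)) +
      Complex.exp (Complex.I * T * (qP - qS))) (Complex.exp (Complex.I * T * (2 * qP)))
    have hs3 := norm_add_le (Complex.exp (Complex.I * T * (qP + qS)))
      (Complex.exp (Complex.I * T * (qP - qS)))
    rw [norm_one] at hs1
    linarith
  -- rewrite goal
  have hqPn : (0:ℝ) < ‖qP‖ := norm_pos_iff.mpr hqP
  have hqSn : (0:ℝ) < ‖qS‖ := norm_pos_iff.mpr hqS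
  have hωn : (0:ℝ) < ‖ω‖ := norm_pos_iff.mpr hω
  simp only [G, hz]
  have hE : Complex.exp (-Complex.I * -T * qP) = Complex.exp (Complex.I * T * qP) := by
    congr 1; ring
  rw [hE]
  set e := Complex.exp (Complex.I * T * qP) with he
  have expand : e • ((Complex.sin (-T * qP) / qP) • A x +
      (Complex.sin (-T * qS) / qS) • B y +
      ((Complex.cos (-T * qS) - Complex.cos (-T * qP)) / ω ^ 2) • C) =
      (e * Complex.sin (-T * qP) / qP) • A x +
      (e * Complex.sin (-T * qS) / qS) • B y +
      (e * (Complex.cos (-T * qS) - Complex.cos (-T * qP)) / ω ^ 2) • C := by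
    simp only [smul_add, smul_smul]; ring_nf
  rw [expand]
  have ha : ‖e * Complex.sin (-T * qP) / qP‖ ≤ Real.exp (t * γ) / ‖qP‖ := by
    rw [norm_div]
    exact div_le_div_of_nonneg_right h1 hqPn.le
  have hb : ‖e * Complex.sin (-T * qS) / qS‖ ≤ Real.exp (t * γ) / ‖qS‖ := by
    rw [norm_div]
    exact div_le_div_of_nonneg_right h2 hqSn.le
  have hc : ‖e * (Complex.cos (-T * qS) - Complex.cos (-T * qP)) / ω ^ 2‖ ≤
      2 * Real.exp (t * γ) / ‖ω‖ ^ 2 := by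
    rw [norm_div, norm_pow]
    exact div_le_div_of_nonneg_right h3 (by positivity)
  calc ‖(e * Complex.sin (-T * qP) / qP) • A x +
      (e * Complex.sin (-T * qS) / qS) • B y +
      (e * (Complex.cos (-T * qS) - Complex.cos (-T * qP)) / ω ^ 2) • C‖
      ≤ ‖(e * Complex.sin (-T * qP) / qP) • A x‖ +
        ‖(e * Complex.sin (-T * qS) / qS) • B y‖ +
        ‖(e * (Complex.cos (-T * qS) - Complex.cos (-T * qP)) / ω ^ 2) • C‖ :=
      norm_add₃_le
    _ = ‖e * Complex.sin (-T * qP) / qP‖ * ‖A x‖ +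
        ‖e * Complex.sin (-T * qS) / qS‖ * ‖B y‖ +
        ‖e * (Complex.cos (-T * qS) - Complex.cos (-T * qP)) / ω ^ 2‖ * ‖C‖ := by
      rw [norm_smul, norm_smul, norm_smul]
    _ ≤ (Real.exp (t * γ) / ‖qP‖) * ‖A x‖ + (Real.exp (t * γ) / ‖qS‖) * ‖B y‖ +
        (2 * Real.exp (t * γ) / ‖ω‖ ^ 2) * ‖C‖ := by
      exact add_le_add (add_le_add (mul_le_mul_of_nonneg_right ha (norm_nonneg _))
        (mul_le_mul_of_nonneg_right hb (norm_nonneg _)))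
        (mul_le_mul_of_nonneg_right hc (norm_nonneg _))
    _ = (‖A x‖ / ‖qP‖ + ‖B y‖ / ‖qS‖ + 2 * ‖C‖ / ‖ω‖ ^ 2) *
        Real.exp (t * γ) := by
      ring
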